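/- If G is a finite simple graph and some power I(G)^q of its edge ideal has a linear resolution (in particular, if I(G)^q has linear quotients) for some q ≥ 1, then G is gapfree. -/

import Mathlib

open MvPolynomial

/-- An ideal is generated by a subset of the variables. -/
def genByVars {K : Type*} [Field K] {σ : Type*} (J : Ideal (MvPolynomial σ K)) : Prop :=
  ∃ S : Set σ, J = Ideal.span ((fun i => (X i : MvPolynomial σ K)) '' S)

/-- An equigenerated monomial ideal has linear quotients: there is an ordering of a
minimal monomial generating system (an antichain of exponent vectors) such that each
successive colon ideal is generated by variables. -/
def HasLinearQuotients {K : Type*} [Field K] {σ : Type*} (I : Ideal (MvPolynomial σ K)) : Prop :=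
  ∃ (r : ℕ) (d : Fin r → (σ →₀ ℕ)),
    (∀ i j : Fin r, i ≠ j → ¬ d i ≤ d j) ∧
    Ideal.span (Set.range fun i => (monomial (d i) (1 : K))) = I ∧
    ∀ i : Fin r,
      genByVars (Submodule.colon
        (Ideal.span ((fun j => (monomial (d j) (1 : K))) '' {j | j < i}))
        (Ideal.span {(monomial (d i) (1 : K))}))

/-- A graph is gapfree if any two disjoint edges are joined by an edge meeting both. -/
def Gapfree {V : Type*} (G : SimpleGraph V) : Prop :=
  ∀ a b c d : V, G.Adj a b → G.Adj c d → ({a, b} : Set V) ∩ {c, d} = ∅ →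
    ∃ u v : V, G.Adj u v ∧ (({u, v} : Set V) ∩ {a, b}).Nonempty ∧
      (({u, v} : Set V) ∩ {c, d}).Nonempty

/-- The edge ideal of a graph. -/
noncomputable def edgeIdeal (K : Type*) [Field K] {V : Type*} (G : SimpleGraph V) :
    Ideal (MvPolynomial V K) :=
  Ideal.span {m | ∃ a b : V, G.Adj a b ∧ m = X a * X b}

section Aux

variable {K : Type*} [Field K] {V : Type*}

/-- Exponent vectors of edges. -/
def EVec (G : SimpleGraph V) : Set (V →₀ ℕ) :=
  {w | ∃ a b, G.Adj a b ∧ w = Finsupp.single a 1 + Finsupp.single b 1}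

/-- Exponent vectors that are sums of `q` edge vectors. -/
def SqSet (G : SimpleGraph V) (q : ℕ) : Set (V →₀ ℕ) :=
  {w | ∃ f : Fin q → (V →₀ ℕ), (∀ t, f t ∈ EVec G) ∧ w = ∑ t, f t}

lemma X_mul_X (a b : V) :
    (X a * X b : MvPolynomial V K) = monomial (Finsupp.single a 1 + Finsupp.single b 1) 1 := by
  rw [← pow_one (X a), ← pow_one (X b), X_pow_eq_monomial, X_pow_eq_monomial,
    monomial_mul, one_mul]

lemma edgeIdeal_eq (G : SimpleGraph V) :
    edgeIdeal K G = Ideal.span ((fun s => monomial s (1 : K)) '' EVec G) := by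
  unfold edgeIdeal EVec
  congr 1
  ext m
  simp only [Set.mem_setOf_eq, Set.mem_image]
  constructor
  · rintro ⟨a, b, hab, rfl⟩
    exact ⟨_, ⟨a, b, hab, rfl⟩, (X_mul_X a b).symm⟩
  · rintro ⟨w, ⟨a, b, hab, rfl⟩, rfl⟩
    exact ⟨a, b, hab, (X_mul_X a b).symm⟩

lemma pow_edgeIdeal (G : SimpleGraph V) (q : ℕ) :
    (edgeIdeal K G) ^ q = Ideal.span ((fun s => monomial s (1 : K)) '' SqSet G q) := by
  induction q with
  | zero =>
      have h0 : SqSet G 0 = {0} := by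
        ext w
        simp [SqSet]
      rw [pow_zero, h0]
      simp only [Set.image_singleton, monomial_zero', C_1]
      rw [Ideal.one_eq_top, Ideal.span_singleton_one]
  | succ q ih =>
      rw [pow_succ, ih, edgeIdeal_eq, Ideal.span_mul_span']
      congr 1
      ext m
      constructor
      · rintro ⟨x, ⟨w1, ⟨f, hf, rfl⟩, rfl⟩, y, ⟨e, he, rfl⟩, rfl⟩
        refine ⟨(∑ t, f t) + e, ⟨Fin.snoc f e, ?_, ?_⟩, ?_⟩
        · intro t
          refine Fin.lastCases ?_ ?_ t
          · simpa using he
          · intro t0; simpa using hf t0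
        · rw [Fin.sum_univ_castSucc]
          simp
        · simp [monomial_mul]
      · rintro ⟨w, ⟨f, hf, rfl⟩, rfl⟩
        refine ⟨monomial (∑ t : Fin q, f t.castSucc) 1,
          ⟨∑ t : Fin q, f t.castSucc, ⟨fun t => f t.castSucc, fun t => hf _, rfl⟩, rfl⟩,
          monomial (f (Fin.last q)) 1, ⟨f (Fin.last q), hf _, rfl⟩, ?_⟩
        simp only [monomial_mul, one_mul, ← Fin.sum_univ_castSucc]

lemma exists_edges_le {G : SimpleGraph V} {q : ℕ} {e : V →₀ ℕ}
    (h : (monomial e (1 : K)) ∈ (edgeIdeal K G) ^ q) :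
    ∃ w ∈ SqSet G q, w ≤ e := by
  rw [pow_edgeIdeal] at h
  refine mem_ideal_span_monomial_image.mp h e ?_
  classical
  rw [support_monomial, if_neg one_ne_zero]
  exact Finset.mem_singleton_self e

lemma mono_mem_pow {G : SimpleGraph V} {q : ℕ} {w : V →₀ ℕ} (hw : w ∈ SqSet G q) :
    (monomial w (1 : K)) ∈ (edgeIdeal K G) ^ q := by
  rw [pow_edgeIdeal]
  exact Ideal.subset_span ⟨w, hw, rfl⟩

lemma apply_ne_of_edge_le {x y v : V} {e : V →₀ ℕ}
    (h : Finsupp.single x 1 + Finsupp.single y 1 ≤ e) (hv : v = x ∨ v = y) : e v ≠ 0 := by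
  have h1 := Finsupp.le_def.mp h v
  rcases hv with rfl | rfl <;>
    simp only [Finsupp.add_apply, Finsupp.single_eq_same] at h1 <;> omega

/-- If a sum of `q` edge vectors is dominated by `e` and every edge with both endpoints
in the support of `e` is `{a,b}`, then the sum is `q • (δa + δb)`. -/
lemma sum_edges_eq {G : SimpleGraph V} {q : ℕ} {f : Fin q → (V →₀ ℕ)}
    (hf : ∀ t, f t ∈ EVec G) {e : V →₀ ℕ} (hle : (∑ t, f t) ≤ e) {a b : V}
    (hedge : ∀ x y, G.Adj x y → e x ≠ 0 → e y ≠ 0 →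
      Finsupp.single x 1 + Finsupp.single y 1 = Finsupp.single a 1 + Finsupp.single b 1) :
    (∑ t, f t) = q • (Finsupp.single a 1 + Finsupp.single b 1) := by
  have hterm : ∀ t, f t = Finsupp.single a 1 + Finsupp.single b 1 := by
    intro t
    obtain ⟨x, y, hxy, hft⟩ := hf t
    have hle' : f t ≤ e :=
      le_trans (Finset.single_le_sum (f := f) (fun i _ => zero_le) (Finset.mem_univ t)) hle
    rw [hft] at hle'
    rw [hft]
    exact hedge x y hxy (apply_ne_of_edge_le hle' (Or.inl rfl))
      (apply_ne_of_edge_le hle' (Or.inr rfl))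
  rw [Finset.sum_congr rfl (fun t _ => hterm t), Finset.sum_const, Finset.card_univ,
    Fintype.card_fin]

lemma pair_smul_apply_ne {c d x : V} {q : ℕ}
    (h : (q • (Finsupp.single c 1 + Finsupp.single d 1) : V →₀ ℕ) x ≠ 0) : x = c ∨ x = d := by
  by_contra hx
  push_neg at hx
  apply h
  have h1 : Finsupp.single c 1 x = 0 := Finsupp.single_eq_of_ne (fun h => hx.1 h)
  have h2 : Finsupp.single d 1 x = 0 := Finsupp.single_eq_of_ne (fun h => hx.2 h)
  rw [Finsupp.smul_apply, Finsupp.add_apply, h1, h2]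
  simp

lemma pair_of_mem {x y c d : V} (hcd : c ≠ d) (hx : x = c ∨ x = d) (hy : y = c ∨ y = d)
    (hxy : x ≠ y) :
    Finsupp.single x 1 + Finsupp.single y 1 = Finsupp.single c 1 + Finsupp.single d 1 := by
  rcases hx with rfl | rfl <;> rcases hy with rfl | rfl
  · exact absurd rfl hxy
  · rfl
  · exact add_comm _ _
  · exact absurd rfl hxy

/-- `q•(δc+δd)` is one of the exponent vectors in any antichain generating system of `I(G)^q`. -/
lemma exists_generator {G : SimpleGraph V} {q r : ℕ} {d : Fin r → (V →₀ ℕ)}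
    (hanti : ∀ i j : Fin r, i ≠ j → ¬ d i ≤ d j)
    (hspan : Ideal.span (Set.range fun i => (monomial (d i) (1 : K))) = (edgeIdeal K G) ^ q)
    {c e : V} (hce : G.Adj c e) :
    ∃ j : Fin r, d j = q • (Finsupp.single c 1 + Finsupp.single e 1) := by
  classical
  set E : V →₀ ℕ := q • (Finsupp.single c 1 + Finsupp.single e 1) with hE
  have hmem : (monomial E (1 : K)) ∈ (edgeIdeal K G) ^ q := by
    apply mono_mem_pow
    exact ⟨fun _ => Finsupp.single c 1 + Finsupp.single e 1,
      fun _ => ⟨c, e, hce, rfl⟩, by rw [Finset.sum_const, Finset.card_univ, Fintype.card_fin]⟩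
  rw [← hspan] at hmem
  have hrange : (Set.range fun i => (monomial (d i) (1 : K)))
      = (fun s => monomial s (1 : K)) '' Set.range d := by
    rw [← Set.range_comp]; rfl
  rw [hrange] at hmem
  obtain ⟨_, ⟨j, rfl⟩, hjle⟩ := mem_ideal_span_monomial_image.mp hmem E
    (by rw [support_monomial, if_neg one_ne_zero]; exact Finset.mem_singleton_self E)
  refine ⟨j, le_antisymm hjle ?_⟩
  have hdj : (monomial (d j) (1 : K)) ∈ (edgeIdeal K G) ^ q := by
    rw [← hspan]; exact Ideal.subset_span ⟨j, rfl⟩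
  obtain ⟨w, ⟨f, hf, rfl⟩, hwle⟩ := exists_edges_le hdj
  have hsum : (∑ t, f t) = q • (Finsupp.single c 1 + Finsupp.single e 1) := by
    refine sum_edges_eq hf (le_trans hwle hjle) ?_
    intro x y hxy hx hy
    exact pair_of_mem hce.ne (pair_smul_apply_ne hx) (pair_smul_apply_ne hy) hxy.ne
  rw [← hE] at hsum
  rw [← hsum]
  exact hwle

/-- The core contradiction: a gap plus linear quotients with the `cd`-generator earlier. -/
lemma core {G : SimpleGraph V} {q r : ℕ} {d : Fin r → (V →₀ ℕ)}
    (hanti : ∀ i j : Fin r, i ≠ j → ¬ d i ≤ d j)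
    (hspan : Ideal.span (Set.range fun i => (monomial (d i) (1 : K))) = (edgeIdeal K G) ^ q)
    (hcolon : ∀ i : Fin r, genByVars (Submodule.colon
        (Ideal.span ((fun j => (monomial (d j) (1 : K))) '' {j | j < i}))
        (Ideal.span {(monomial (d i) (1 : K))})))
    {a b c e : V}
    (hno : ∀ x y, (x = c ∨ x = e) → (y = a ∨ y = b) → ¬ G.Adj x y)
    {i j : Fin r} (hji : j < i)
    (hdi : d i = q • (Finsupp.single a 1 + Finsupp.single b 1))
    (hdj : d j = q • (Finsupp.single c 1 + Finsupp.single e 1)) : False := by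
  classical
  obtain ⟨S, hS⟩ := hcolon i
  set J : Ideal (MvPolynomial V K) :=
    Ideal.span ((fun j => (monomial (d j) (1 : K))) '' {j | j < i}) with hJ
  -- the earlier generator `monomial (d j) 1` lies in the colon ideal
  have hvJ : (monomial (d j) (1 : K)) ∈ J := Ideal.subset_span ⟨j, hji, rfl⟩
  have hvcolon : (monomial (d j) (1 : K)) ∈
      Submodule.colon J (Ideal.span {(monomial (d i) (1 : K))}) := by
    rw [Submodule.mem_colon]
    intro p _
    rw [smul_eq_mul]
    exact Ideal.mul_mem_right p J hvJ
  rw [hS] at hvcolon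
  obtain ⟨s, hsS, hsne⟩ := mem_ideal_span_X_image.mp hvcolon (d j)
    (by rw [support_monomial, if_neg one_ne_zero]; exact Finset.mem_singleton_self (d j))
  have hs : s = c ∨ s = e := by
    rw [hdj] at hsne; exact pair_smul_apply_ne hsne
  -- hence the variable `X s` is in the colon ideal, so `X s * monomial (d i) 1 ∈ J`
  have hXs : (X s : MvPolynomial V K) ∈
      Submodule.colon J (Ideal.span {(monomial (d i) (1 : K))}) := by
    rw [hS]; exact Ideal.subset_span ⟨s, hsS, rfl⟩
  have hXsu : (X s : MvPolynomial V K) * monomial (d i) 1 ∈ J :=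
    by
      have := Submodule.mem_colon.mp hXs _ (Ideal.subset_span (Set.mem_singleton _))
      rwa [smul_eq_mul] at this
  have hXsu' : (monomial (Finsupp.single s 1 + d i) (1 : K)) ∈ J := by
    rwa [← pow_one (X s), X_pow_eq_monomial, monomial_mul, one_mul] at hXsu
  -- rewrite J as a monomial ideal over the image of d
  have hJ2 : J = Ideal.span ((fun s => monomial s (1 : K)) '' (d '' {j | j < i})) := by
    rw [hJ, Set.image_image]
  rw [hJ2] at hXsu'
  obtain ⟨_, ⟨k, hk, rfl⟩, hkle⟩ := mem_ideal_span_monomial_image.mp hXsu'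
    (Finsupp.single s 1 + d i)
    (by rw [support_monomial, if_neg one_ne_zero]; exact Finset.mem_singleton_self _)
  -- d k is in I^q, so it dominates a sum of q edges, each of which must be δa+δb
  have hdk : (monomial (d k) (1 : K)) ∈ (edgeIdeal K G) ^ q := by
    rw [← hspan]; exact Ideal.subset_span ⟨k, rfl⟩
  obtain ⟨w, ⟨f, hf, rfl⟩, hwle⟩ := exists_edges_le hdk
  have hEsupp : ∀ x, (Finsupp.single s 1 + d i : V →₀ ℕ) x ≠ 0 → x = s ∨ (x = a ∨ x = b) := by
    intro x hx
    by_contra hc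
    push_neg at hc
    apply hx
    have h1 : Finsupp.single s 1 x = 0 := Finsupp.single_eq_of_ne (fun h => hc.1 h)
    have h2 : Finsupp.single a 1 x = 0 := Finsupp.single_eq_of_ne (fun h => hc.2.1 h)
    have h3 : Finsupp.single b 1 x = 0 := Finsupp.single_eq_of_ne (fun h => hc.2.2 h)
    rw [Finsupp.add_apply, h1, hdi, Finsupp.smul_apply, Finsupp.add_apply, h2, h3]
    simp
  have hsum : (∑ t, f t) = q • (Finsupp.single a 1 + Finsupp.single b 1) := by
    refine sum_edges_eq hf (le_trans hwle hkle) ?_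
    intro x y hxy hx hy
    rcases hEsupp x hx with rfl | hx'
    · rcases hEsupp y hy with rfl | hy'
      · exact absurd rfl hxy.ne
      · exact absurd hxy (hno x y hs hy')
    · rcases hEsupp y hy with rfl | hy'
      · exact absurd hxy.symm (hno y x hs hx')
      · -- x, y ∈ {a, b}
        rcases hx' with rfl | rfl <;> rcases hy' with rfl | rfl
        · exact absurd rfl hxy.ne
        · rfl
        · exact add_comm _ _
        · exact absurd rfl hxy.ne
  -- so d i = q•(δa+δb) = ∑ f ≤ d k, contradicting the antichain property
  have : d i ≤ d k := by rw [hdi, ← hsum]; exact hwle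
  exact hanti i k (Ne.symm hk.ne) this

end Aux

/-- if some power `I(G)^q` (`q ≥ 1`) of the edge ideal of a graph `G`
has linear quotients, then `G` is gapfree. -/
theorem stmt2 {K : Type*} [Field K] {V : Type*} (G : SimpleGraph V) (q : ℕ) (hq : 1 ≤ q)
    (h : HasLinearQuotients ((edgeIdeal K G) ^ q)) : Gapfree G := by
  obtain ⟨r, d, hanti, hspan, hcolon⟩ := h
  intro a b c e hab hce hdisj
  by_contra hno
  push_neg at hno
  -- no edge meets both pairs
  have hno' : ∀ x y, (x = c ∨ x = e) → (y = a ∨ y = b) → ¬ G.Adj x y := by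
    intro x y hx hy hadj
    have hne : (({x, y} : Set V) ∩ {a, b}).Nonempty :=
      ⟨y, by simp, by rcases hy with rfl | rfl <;> simp⟩
    have h0 := hno x y hadj hne
    have hxm : x ∈ ({x, y} : Set V) ∩ {c, e} :=
      ⟨by simp, by rcases hx with rfl | rfl <;> simp⟩
    rw [h0] at hxm
    exact hxm
  have hno'' : ∀ x y, (x = a ∨ x = b) → (y = c ∨ y = e) → ¬ G.Adj x y := by
    intro x y hx hy hadj
    exact hno' y x hy hx hadj.symm
  -- distinctness of the pairs
  have hdis : ∀ x y, (x = a ∨ x = b) → (y = c ∨ y = e) → x ≠ y := by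
    intro x y hx hy hxy
    have hxm : x ∈ ({a, b} : Set V) ∩ {c, e} := by
      constructor
      · rcases hx with rfl | rfl <;> simp
      · subst hxy; rcases hy with rfl | rfl <;> simp
    rw [hdisj] at hxm
    exact hxm
  -- both (ab)^q and (ce)^q appear among the generators
  obtain ⟨i, hdi⟩ := exists_generator (K := K) hanti hspan hab
  obtain ⟨j, hdj⟩ := exists_generator (K := K) hanti hspan hce
  have hij : i ≠ j := by
    intro hij
    rw [hij, hdj] at hdi
    have := congrArg (fun w => w a) hdi
    simp only [Finsupp.smul_apply, Finsupp.add_apply] at this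
    have h1 : Finsupp.single c 1 a = 0 :=
      Finsupp.single_eq_of_ne (hdis a c (Or.inl rfl) (Or.inl rfl))
    have h2 : Finsupp.single e 1 a = 0 :=
      Finsupp.single_eq_of_ne (hdis a e (Or.inl rfl) (Or.inr rfl))
    have h3 : Finsupp.single a 1 a = (1 : ℕ) := Finsupp.single_eq_same
    rw [h1, h2, h3, smul_eq_mul, smul_eq_mul] at this
    simp [Nat.mul_eq_zero] at this
    omega
  rcases lt_or_gt_of_ne hij with hlt | hgt
  · exact core hanti hspan hcolon hno'' hlt hdj hdi
  · exact core hanti hspan hcolon hno' hgt hdi hdj
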